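/- Let n ≥ 3, let m_1 < ... < m_n be a generalized arithmetic sequence with m_i = h·m_1 + (i-1)d for i ≥ 2, h > 1, h | d, gcd(m_1, d) = 1, and set δ := ⌊(m_1-1)/(n-1)⌋·h + d + h and δ' := δ/h. For each j ∈ {0,...,δ'-1}, let β_j := min { b ∈ ℤ⁺ : j·h·m_1 + b·m_2 ∈ ℕm_3 + ... + ℕm_n }. Then for each such j there exist unique σ_j ∈ {3,...,n} and λ_j ∈ ℕ such that j·h·m_1 + β_j·m_2 = m_{σ_j} + λ_j·m_n. -/

import Mathlib

/-- Build a weight function realizing given count `c` and weight-sum `S`. -/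
lemma repr_exists (n : ℕ) (hn : 3 ≤ n) :
    ∀ c S : ℕ, 2*c ≤ S → S ≤ c*(n-1) →
    ∃ δ : ℕ → ℕ, (∑ i ∈ Finset.Icc 3 n, δ i) = c ∧
      (∑ i ∈ Finset.Icc 3 n, δ i * (i-1)) = S := by
  intro c
  induction c with
  | zero =>
    intro S h1 h2
    refine ⟨fun _ => 0, by simp, ?_⟩
    have : S = 0 := by omega
    simp [this]
  | succ c ih =>
    intro S h1 h2
    have hexp : (c+1)*(n-1) = c*(n-1) + (n-1) := by ring
    have hA : 2 ≤ n - 1 := by omega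
    have hB : 2 ≤ S - 2*c := by omega
    obtain ⟨w, hwdef⟩ : ∃ w, w = min (n-1) (S - 2*c) := ⟨_, rfl⟩
    have hw2 : 2 ≤ w := hwdef ▸ le_min hA hB
    have hwn : w ≤ n - 1 := hwdef ▸ min_le_left _ _
    have hwB : w ≤ S - 2*c := hwdef ▸ min_le_right _ _
    have hwS : w ≤ S := by omega
    have hub : S - w ≤ c * (n-1) := by
      rcases le_total (n-1) (S - 2*c) with h' | h'
      · have hwe : w = n - 1 := by rw [hwdef, min_eq_left h']
        omega
      · have hwe : w = S - 2*c := by rw [hwdef, min_eq_right h']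
        have h2c : c*2 ≤ c*(n-1) := Nat.mul_le_mul_left _ (by omega)
        omega
    obtain ⟨δ', hc', hS'⟩ := ih (S - w) (by omega) hub
    have hmem : w + 1 ∈ Finset.Icc 3 n := Finset.mem_Icc.mpr (by omega)
    refine ⟨fun i => δ' i + if i = w+1 then 1 else 0, ?_, ?_⟩
    · rw [Finset.sum_add_distrib, hc', Finset.sum_ite_eq' _ (w+1) (fun _ => 1)]
      simp [hmem]
    · have : ∀ i ∈ Finset.Icc 3 n,
          (δ' i + if i = w+1 then 1 else 0) * (i-1)
            = δ' i * (i-1) + (if i = w+1 then (i-1) else 0) := by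
        intro i _
        split <;> ring
      rw [Finset.sum_congr rfl this, Finset.sum_add_distrib, hS',
        Finset.sum_ite_eq' _ (w+1) (fun i => i - 1)]
      simp only [hmem, if_true]
      omega

/-- Core impossibility: `j*m1 = c*m1 + S*e` can't happen for `j ≤ p + e`. -/
lemma lemA (n m1 e j c S p : ℕ) (hn : 3 ≤ n) (hm1 : 1 ≤ m1) (he : 1 ≤ e)
    (hgcd : Nat.Coprime m1 e) (hp : p * (n-1) ≤ m1 - 1) (hj : j ≤ p + e)
    (hc : 1 ≤ c) (h1 : 2*c ≤ S) (h2 : S ≤ c*(n-1))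
    (heq : j*m1 = c*m1 + S*e) : False := by
  have hS0 : 0 < S := by omega
  have hse : 0 < S * e := Nat.mul_pos hS0 he
  have hcj : c < j := by
    have h3 : c * m1 < j * m1 := by omega
    exact Nat.lt_of_mul_lt_mul_right h3
  have heq2 : (j - c) * m1 = S * e := by
    have h4 : (j - c) * m1 + c * m1 = j * m1 := by
      rw [← Nat.add_mul]
      congr 1
      omega
    omega
  have hdvdSe : m1 ∣ S * e := ⟨j - c, by rw [← heq2]; ring⟩
  have hdvdS : m1 ∣ S := (Nat.Coprime.dvd_of_dvd_mul_right hgcd hdvdSe)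
  have hSm1 : m1 ≤ S := Nat.le_of_dvd hS0 hdvdS
  -- c ≥ p + 1
  have hcp : p + 1 ≤ c := by
    by_contra hcon
    push_neg at hcon
    have h5 : c * (n-1) ≤ p * (n-1) := Nat.mul_le_mul_right _ (by omega)
    omega
  -- j - c ≥ e
  have hje : e ≤ j - c := by
    by_contra hcon
    push_neg at hcon
    have h6 : (j - c) * m1 + m1 ≤ e * m1 := by
      calc (j - c) * m1 + m1 = ((j - c) + 1) * m1 := by ring
        _ ≤ e * m1 := Nat.mul_le_mul_right _ (by omega)
    have h7 : e * m1 ≤ S * e := by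
      calc e * m1 = m1 * e := by ring
        _ ≤ S * e := Nat.mul_le_mul_right _ hSm1
    omega
  omega

/-- Uniqueness over ℤ. -/
lemma uniq_aux (A E N w w' l l' : ℤ) (hA : 1 ≤ A) (hE : 1 ≤ E)
    (hw : 2 ≤ w) (hw2 : w ≤ N) (hw' : 2 ≤ w') (hw'2 : w' ≤ N)
    (hl : 0 ≤ l) (hl' : 0 ≤ l')
    (heq : (1+l)*A + (w + l*N)*E = (1+l')*A + (w' + l'*N)*E) :
    l = l' ∧ w = w' := by
  have hll : l = l' := by
    rcases lt_trichotomy l l' with hlt | hEq | hgt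
    · exfalso
      have h1 : 1 ≤ l' - l := by omega
      nlinarith [mul_le_mul_of_nonneg_left (show w - w' ≤ N - 2 by omega) (show (0:ℤ) ≤ E by omega),
        mul_le_mul_of_nonneg_right (show (1:ℤ) ≤ l' - l by omega) (show (0:ℤ) ≤ A by omega),
        mul_le_mul_of_nonneg_left (mul_le_mul_of_nonneg_right h1 (show (0:ℤ) ≤ N by omega)) (show (0:ℤ) ≤ E by omega)]
    · exact hEq
    · exfalso
      have h1 : 1 ≤ l - l' := by omega
      nlinarith [mul_le_mul_of_nonneg_left (show w' - w ≤ N - 2 by omega) (show (0:ℤ) ≤ E by omega),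
        mul_le_mul_of_nonneg_right (show (1:ℤ) ≤ l - l' by omega) (show (0:ℤ) ≤ A by omega),
        mul_le_mul_of_nonneg_left (mul_le_mul_of_nonneg_right h1 (show (0:ℤ) ≤ N by omega)) (show (0:ℤ) ≤ E by omega)]
  subst hll
  refine ⟨rfl, ?_⟩
  have h2 : w * E = w' * E := by linarith
  exact mul_right_cancel₀ (by omega) h2

theorem stmt_10 (n h d m1 : ℕ) (m : ℕ → ℕ)
    (hn : 3 ≤ n) (hh : 2 ≤ h) (hd : 1 ≤ d) (hm1 : 1 ≤ m1)
    (hdvd : h ∣ d) (hgcd : Nat.gcd m1 d = 1)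
    (hm0 : m 1 = m1)
    (hm : ∀ i, 2 ≤ i → i ≤ n → m i = h * m1 + (i - 1) * d) :
    ∀ j, j < (((m1 - 1) / (n - 1)) * h + d + h) / h →
      ∀ βj : ℕ,
        IsLeast {b : ℕ | 0 < b ∧
            ∃ δ : ℕ → ℕ, j * h * m1 + b * m 2 = ∑ i ∈ Finset.Icc 3 n, δ i * m i} βj →
        ∃! x : ℕ × ℕ, 3 ≤ x.1 ∧ x.1 ≤ n ∧
          j * h * m1 + βj * m 2 = m x.1 + x.2 * m n := by
  intro j hj βj hβ
  obtain ⟨e, he⟩ := hdvd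
  have he1 : 1 ≤ e := by
    rcases Nat.eq_zero_or_pos e with h0 | h0
    · subst h0
      simp at he
      omega
    · exact h0
  obtain ⟨p, hpdef⟩ : ∃ p, p = (m1 - 1) / (n - 1) := ⟨_, rfl⟩
  have hple : p * (n-1) ≤ m1 - 1 := by rw [hpdef]; exact Nat.div_mul_le_self _ _
  rw [← hpdef] at hj
  have hjle : j ≤ p + e := by
    have hj' : j < p + e + 1 := by
      calc j < (p*h + d + h)/h := hj
        _ = p + e + 1 := by
            rw [he, show p*h + h*e + h = h*(p+e+1) by ring,
              Nat.mul_div_cancel_left _ (show 0 < h by omega)]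
    omega
  have hgcd' : Nat.Coprime m1 e := Nat.Coprime.coprime_dvd_right ⟨h, by rw [he]; ring⟩ hgcd
  obtain ⟨⟨hβpos, δ0, hδ0⟩, hlb⟩ := hβ
  have hm2 : m 2 = h*m1 + d := by rw [hm 2 (by norm_num) (by omega)]; norm_num
  -- key sum identity
  have sumkey : ∀ δ : ℕ → ℕ, ∑ i ∈ Finset.Icc 3 n, δ i * m i
      = h * ((∑ i ∈ Finset.Icc 3 n, δ i) * m1 + (∑ i ∈ Finset.Icc 3 n, δ i * (i-1)) * e) := by
    intro δ
    have step : ∀ i ∈ Finset.Icc 3 n,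
        δ i * m i = δ i * (h*m1) + (δ i * (i-1)) * (h*e) := by
      intro i hi
      obtain ⟨hi1, hi2⟩ := Finset.mem_Icc.mp hi
      rw [hm i (by omega) hi2, he]
      ring
    rw [Finset.sum_congr rfl step, Finset.sum_add_distrib, ← Finset.sum_mul, ← Finset.sum_mul]
    ring
  -- forward conversion
  have forward : ∀ b : ℕ, ∀ δ : ℕ → ℕ,
      j*h*m1 + b * m 2 = ∑ i ∈ Finset.Icc 3 n, δ i * m i →
      ∃ c S : ℕ, 2*c ≤ S ∧ S ≤ c*(n-1) ∧ (j+b)*m1 + b*e = c*m1 + S*e := by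
    intro b δ hδ
    refine ⟨∑ i ∈ Finset.Icc 3 n, δ i, ∑ i ∈ Finset.Icc 3 n, δ i * (i-1), ?_, ?_, ?_⟩
    · rw [Finset.mul_sum]
      refine Finset.sum_le_sum ?_
      intro i hi
      obtain ⟨hi1, hi2⟩ := Finset.mem_Icc.mp hi
      calc 2 * δ i = δ i * 2 := mul_comm _ _
        _ ≤ δ i * (i-1) := Nat.mul_le_mul_left _ (by omega)
    · rw [Finset.sum_mul]
      refine Finset.sum_le_sum ?_
      intro i hi
      obtain ⟨hi1, hi2⟩ := Finset.mem_Icc.mp hi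
      exact Nat.mul_le_mul_left _ (by omega)
    · have lhs : j*h*m1 + b * m 2 = h * ((j+b)*m1 + b*e) := by
        rw [hm2, he]; ring
      rw [lhs, sumkey δ] at hδ
      exact Nat.eq_of_mul_eq_mul_left (by omega) hδ
  -- backward: membership from numeric data
  have backward : ∀ b c S : ℕ, 1 ≤ b → 2*c ≤ S → S ≤ c*(n-1) →
      (j+b)*m1 + b*e = c*m1 + S*e → βj ≤ b := by
    intro b c S hb h1 h2 heq
    obtain ⟨δ, hδc, hδS⟩ := repr_exists n hn c S h1 h2
    refine hlb ⟨hb, δ, ?_⟩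
    rw [sumkey δ, hδc, hδS, ← heq, hm2, he]
    ring
  -- instantiated lemma A
  have lemAinst : ∀ c S : ℕ, 1 ≤ c → 2*c ≤ S → S ≤ c*(n-1) →
      j*m1 = c*m1 + S*e → False := fun c S hc h1 h2 heq =>
    lemA n m1 e j c S p hn hm1 he1 hgcd' hple hjle hc h1 h2 heq
  -- descent lemma
  have lemE : ∀ c : ℕ, ∀ b S : ℕ, 1 ≤ c → b ≤ βj → 2*c ≤ S → S ≤ c*(n-1) →
      (j+b)*m1 + b*e = c*m1 + S*e → b = βj ∧ (c-1)*(n-1)+2 ≤ S := by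
    intro c
    induction c with
    | zero => intro b S hc; omega
    | succ c ih =>
      intro b S hc1 hbβ h1 h2 heq
      have hexp : (c+1)*(n-1) = c*(n-1) + (n-1) := by ring
      rcases le_or_gt (c*(n-1)+2) S with hgood | hbad
      · refine ⟨?_, by simpa using hgood⟩
        by_contra hne
        have hblt : b < βj := lt_of_le_of_ne hbβ hne
        rcases Nat.eq_zero_or_pos b with hb0 | hb1
        · subst hb0
          exact lemAinst (c+1) S (by omega) h1 h2 (by simpa using heq)
        · exact absurd (backward b (c+1) S hb1 h1 h2 heq) (by omega)
      · have hc2 : 1 ≤ c := by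
          rcases Nat.eq_zero_or_pos c with h0 | h0
          · subst h0; omega
          · exact h0
        rcases Nat.eq_zero_or_pos b with hb0 | hb1
        · subst hb0
          exact (lemAinst (c+1) S (by omega) h1 h2 (by simpa using heq)).elim
        · obtain ⟨b', rfl⟩ : ∃ b', b = b' + 1 := ⟨b - 1, by omega⟩
          obtain ⟨S', rfl⟩ : ∃ S', S = S' + 1 := ⟨S - 1, by omega⟩
          have r1 : (j+(b'+1))*m1 + (b'+1)*e = (j+b')*m1 + b'*e + (m1+e) := by ring
          have r2 : (c+1)*m1 + (S'+1)*e = c*m1 + S'*e + (m1+e) := by ring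
          have heq' : (j+b')*m1 + b'*e = c*m1 + S'*e := by linarith [heq, r1, r2]
          have hres := ih b' S' hc2 (by omega) (by omega) (by omega) heq'
          omega
  -- initial numeric data
  obtain ⟨c0, S0, h1, h2, heq⟩ := forward βj δ0 hδ0
  have hc0 : 1 ≤ c0 := by
    rcases Nat.eq_zero_or_pos c0 with h0 | h0
    · exfalso
      subst h0
      have hS0 : S0 = 0 := by omega
      subst hS0
      have : 0 < βj * e := Nat.mul_pos hβpos he1
      have hjm : 0 < (j+βj)*m1 := Nat.mul_pos (by omega) hm1
      simp at heq
      omega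
    · exact h0
  obtain ⟨hbeq, hgoodS⟩ := lemE c0 βj S0 hc0 le_rfl h1 h2 heq
  obtain ⟨c', rfl⟩ : ∃ c', c0 = c' + 1 := ⟨c0 - 1, by omega⟩
  have hexp : (c'+1)*(n-1) = c'*(n-1) + (n-1) := by ring
  simp only [Nat.add_sub_cancel] at hgoodS
  obtain ⟨σ1, hσ1⟩ : ∃ σ1, σ1 = S0 - c'*(n-1) := ⟨_, rfl⟩
  have hσ2 : 2 ≤ σ1 := by omega
  have hσn : σ1 ≤ n - 1 := by omega
  have hσS : σ1 + c'*(n-1) = S0 := by omega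
  have final : j*h*m1 + βj * m 2 = m (σ1+1) + c' * m n := by
    rw [hm2, hm (σ1+1) (by omega) (by omega), hm n (by omega) le_rfl, he,
      show σ1 + 1 - 1 = σ1 by omega]
    calc j*h*m1 + βj*(h*m1 + h*e) = h*((j+βj)*m1 + βj*e) := by ring
      _ = h*((c'+1)*m1 + S0*e) := by rw [heq]
      _ = h*((c'+1)*m1 + (σ1 + c'*(n-1))*e) := by rw [hσS]
      _ = h*m1 + σ1*(h*e) + c'*(h*m1 + (n-1)*(h*e)) := by ring
  refine ⟨(σ1+1, c'), ⟨by omega, by omega, final⟩, ?_⟩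
  rintro ⟨y1, y2⟩ ⟨hy1, hy2, hy3⟩
  obtain ⟨w, rfl⟩ : ∃ w, y1 = w + 1 := ⟨y1 - 1, by omega⟩
  have hEq : m (w+1) + y2 * m n = m (σ1+1) + c' * m n := by
    rw [← hy3, final]
  rw [hm (w+1) (by omega) (by omega), hm (σ1+1) (by omega) (by omega),
    hm n (by omega) le_rfl, he, show w + 1 - 1 = w by omega,
    show σ1 + 1 - 1 = σ1 by omega] at hEq
  -- cast to ℤ
  have hcast : ((1:ℤ)+y2)*((h:ℤ)*m1) + ((w:ℤ) + y2*((n:ℤ)-1))*((h:ℤ)*e)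
      = ((1:ℤ)+c')*((h:ℤ)*m1) + ((σ1:ℤ) + c'*((n:ℤ)-1))*((h:ℤ)*e) := by
    have := congrArg (fun x : ℕ => (x : ℤ)) hEq
    push_cast [Nat.cast_sub (show 1 ≤ n by omega)] at this
    linarith
  have hA1 : 1 ≤ h * m1 := Nat.mul_pos (by omega) hm1
  have hE1 : 1 ≤ h * e := Nat.mul_pos (by omega) he1
  have hwnat : 2 ≤ w := by omega
  have hwle : w + 1 ≤ n := hy2
  have hσle : σ1 + 1 ≤ n := by omega
  obtain ⟨hl, hw⟩ := uniq_aux ((h:ℤ)*m1) ((h:ℤ)*e) ((n:ℤ)-1) w σ1 y2 c'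
    (by exact_mod_cast hA1) (by exact_mod_cast hE1)
    (by exact_mod_cast hwnat)
    (by push_cast; omega)
    (by exact_mod_cast hσ2)
    (by push_cast; omega)
    (Int.natCast_nonneg y2) (Int.natCast_nonneg c') hcast
  have hy2c : y2 = c' := by exact_mod_cast hl
  have hwσ : w = σ1 := by exact_mod_cast hw
  subst hy2c
  subst hwσ
  rfl
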